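/- Let A, B be positive bounded linear operators on a complex Hilbert space H, K a nonempty set of unit vectors, ber(T)=sup_{k∈K}|⟨T k,k⟩|, ‖T‖_ber=sup_{k,l∈K}|⟨T k,l⟩|. Then ‖A^{1/2} B^{1/2}‖_ber ≤ ber(A)^{1/2} · ber(B)^{1/2}, where A^{1/2}, B^{1/2} are the positive square roots of A and B. -/

import Mathlib

open ContinuousLinearMap

noncomputable def berNum {H : Type*} [NormedAddCommGroup H] [InnerProductSpace ℂ H]
    (K : Set H) (T : H →L[ℂ] H) : ℝ :=
  sSup {x : ℝ | ∃ k ∈ K, x = ‖(inner ℂ (T k) k : ℂ)‖}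

noncomputable def berNorm {H : Type*} [NormedAddCommGroup H] [InnerProductSpace ℂ H]
    (K : Set H) (T : H →L[ℂ] H) : ℝ :=
  sSup {x : ℝ | ∃ k ∈ K, ∃ l ∈ K, x = ‖(inner ℂ (T k) l : ℂ)‖}

lemma sq_le_berNum {H : Type*} [NormedAddCommGroup H] [InnerProductSpace ℂ H] [CompleteSpace H]
    (B T : H →L[ℂ] H) (hT : T.IsPositive) (hT2 : T * T = B) (K : Set H)
    (hK1 : ∀ k ∈ K, ‖k‖ = 1) {k : H} (hk : k ∈ K) :
    ‖T k‖ ^ 2 ≤ berNum K B := by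
  have hbdd : BddAbove {x : ℝ | ∃ k ∈ K, x = ‖(inner ℂ (B k) k : ℂ)‖} := by
    refine ⟨‖B‖, ?_⟩
    rintro x ⟨k, hk, rfl⟩
    calc ‖(inner ℂ (B k) k : ℂ)‖ ≤ ‖B k‖ * ‖k‖ := norm_inner_le_norm _ _
      _ ≤ ‖B‖ * ‖k‖ * ‖k‖ := by
          gcongr; exact B.le_opNorm k
      _ = ‖B‖ := by rw [hK1 k hk]; ring
  have key : (inner ℂ (B k) k : ℂ) = (‖T k‖ : ℂ) ^ 2 := by
    have : (inner ℂ (B k) k : ℂ) = inner ℂ (T k) (T k) := by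
      rw [← hT2]
      have := hT.isSelfAdjoint.adjoint_eq
      calc (inner ℂ ((T * T) k) k : ℂ) = inner ℂ ((adjoint T) (T k)) k := by rw [this]; rfl
        _ = inner ℂ (T k) (T k) := by rw [adjoint_inner_left]
    rw [this, inner_self_eq_norm_sq_to_K]
    norm_cast
  have hmem : ‖T k‖ ^ 2 ∈ {x : ℝ | ∃ k ∈ K, x = ‖(inner ℂ (B k) k : ℂ)‖} := by
    refine ⟨k, hk, ?_⟩
    rw [key]
    push_cast
    rw [← Complex.ofReal_pow, Complex.norm_real]
    simp [abs_of_nonneg (pow_nonneg (norm_nonneg _) 2)]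
  exact le_csSup hbdd hmem

theorem berNorm_sqrt_mul_sqrt {H : Type*} [NormedAddCommGroup H] [InnerProductSpace ℂ H] [CompleteSpace H]
    (A B S T : H →L[ℂ] H) (hA : A.IsPositive) (hB : B.IsPositive)
    (hS : S.IsPositive) (hT : T.IsPositive) (hS2 : S * S = A) (hT2 : T * T = B) (K : Set H) (hK : K.Nonempty) (hK1 : ∀ k ∈ K, ‖k‖ = 1) :
    berNorm K (S * T) ≤ Real.sqrt (berNum K A) * Real.sqrt (berNum K B) := by
  have hbound : (0 : ℝ) ≤ Real.sqrt (berNum K A) * Real.sqrt (berNum K B) := by positivity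
  apply Real.sSup_le _ hbound
  rintro x ⟨k, hk, l, hl, rfl⟩
  have h1 : ‖S l‖ ≤ Real.sqrt (berNum K A) := by
    have h := sq_le_berNum A S hS hS2 K hK1 hl
    exact (Real.le_sqrt (norm_nonneg _) (le_trans (by positivity) h)).2 h
  have h2 : ‖T k‖ ≤ Real.sqrt (berNum K B) := by
    have h := sq_le_berNum B T hT hT2 K hK1 hk
    exact (Real.le_sqrt (norm_nonneg _) (le_trans (by positivity) h)).2 h
  have heq : (inner ℂ ((S * T) k) l : ℂ) = inner ℂ (T k) (S l) := by
    have hadj := hS.isSelfAdjoint.adjoint_eq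
    calc (inner ℂ ((S * T) k) l : ℂ) = inner ℂ ((adjoint S) (T k)) l := by rw [hadj]; rfl
      _ = inner ℂ (T k) (S l) := by rw [adjoint_inner_left]
  calc ‖(inner ℂ ((S * T) k) l : ℂ)‖ = ‖(inner ℂ (T k) (S l) : ℂ)‖ := by rw [heq]
    _ ≤ ‖T k‖ * ‖S l‖ := norm_inner_le_norm _ _
    _ ≤ Real.sqrt (berNum K B) * Real.sqrt (berNum K A) := by
        exact mul_le_mul h2 h1 (norm_nonneg _) (Real.sqrt_nonneg _)
    _ = Real.sqrt (berNum K A) * Real.sqrt (berNum K B) := mul_comm _ _
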